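/- (Separator preserves the end-to-end arrival function.) Let A be a time-dependent network on a finite vertex set V, let s, d ∈ V, and suppose V is partitioned into three pairwise disjoint sets V₁, S, V₂ such that A u v and A v u are the constant function ⊤ whenever u ∈ V₁ and v ∈ V₂ (no edges cross the separator S). Let V' = S ∪ {s, d} and define a network A' on V' by A' u v (t) = min(A^{V₁∪S}_{(u,v)}(t), A^{V₂∪S}_{(u,v)}(t)), where a confined arrival function is taken to be the constant ⊤ if u or v lies outside the confining set. Then A' is a time-dependent network and its end-to-end arrival function satisfies A'_{(s,d)}(t) = A_{(s,d)}(t) for every t. -/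

import Mathlib

open scoped ENNReal

/-- Arrival function of a walk: starting at `u` and then visiting the vertices of `l` in
order, departing at time `t`. -/
def walkArr {V : Type*} (A : V → V → ℝ≥0∞ → ℝ≥0∞) : V → List V → ℝ≥0∞ → ℝ≥0∞
  | _, [], t => t
  | u, v :: l, t => walkArr A v l (A u v t)

/-- `l` (together with start vertex `s`) encodes a walk from `s` to `d`: the walk is the
nonempty vertex sequence `s :: l`, whose last vertex must be `d`. -/
def IsWalkTo {V : Type*} (s d : V) (l : List V) : Prop :=
  (s :: l).getLast (List.cons_ne_nil _ _) = d

/-- The end-to-end arrival function: infimum over all walks from `s` to `d`. -/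
noncomputable def endToEnd {V : Type*} (A : V → V → ℝ≥0∞ → ℝ≥0∞) (s d : V) (t : ℝ≥0∞) :
    ℝ≥0∞ :=
  ⨅ l : {l : List V // IsWalkTo s d l}, walkArr A s l.1 t

/-- The FIFO conditions on a time-dependent network: each edge arrival function is
monotone and arrival is not before departure. -/
def FIFO {V : Type*} (A : V → V → ℝ≥0∞ → ℝ≥0∞) : Prop :=
  ∀ u v : V, Monotone (A u v) ∧ ∀ t, t ≤ A u v t

/-- The confined arrival function `A^U_{(u,v)}`: the infimum of walk arrival functions
over all walks from `u` to `v` all of whose vertices lie in `U`. (If `u` or `v` lies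
outside `U` there are no such walks and the infimum is `⊤`.) -/
noncomputable def confArr {V : Type*} (A : V → V → ℝ≥0∞ → ℝ≥0∞) (U : Set V)
    (u v : V) (t : ℝ≥0∞) : ℝ≥0∞ :=
  ⨅ l : {l : List V // IsWalkTo u v l ∧ ∀ x ∈ u :: l, x ∈ U}, walkArr A u l.1 t

section Aux

variable {V : Type*} {A : V → V → ℝ≥0∞ → ℝ≥0∞}

lemma walkArr_mono (hA : FIFO A) (u : V) (l : List V) : Monotone (walkArr A u l) := by
  induction l generalizing u with
  | nil => exact fun a b hab => hab
  | cons v l ih => exact fun a b hab => ih v ((hA u v).1 hab)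

lemma le_walkArr (hA : FIFO A) (u : V) (l : List V) (t : ℝ≥0∞) : t ≤ walkArr A u l t := by
  induction l generalizing u t with
  | nil => exact le_rfl
  | cons v l ih => exact ((hA u v).2 t).trans (ih v _)

lemma walkArr_top (hA : FIFO A) (u : V) (l : List V) : walkArr A u l ⊤ = ⊤ :=
  top_le_iff.mp (le_walkArr hA u l ⊤)

lemma walkArr_append (u : V) (l₁ l₂ : List V) (t : ℝ≥0∞) :
    walkArr A u (l₁ ++ l₂) t =
      walkArr A ((u :: l₁).getLast (List.cons_ne_nil _ _)) l₂ (walkArr A u l₁ t) := by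
  induction l₁ generalizing u t with
  | nil => rfl
  | cons v l₁ ih =>
    show walkArr A v (l₁ ++ l₂) (A u v t) = _
    rw [ih, List.getLast_cons (List.cons_ne_nil _ _)]
    rfl

lemma isWalkTo_cons {u v d : V} {l : List V} : IsWalkTo u d (v :: l) ↔ IsWalkTo v d l := by
  unfold IsWalkTo
  rw [List.getLast_cons (List.cons_ne_nil _ _)]

lemma IsWalkTo.append {a b c : V} {w m : List V} (h₁ : IsWalkTo a b w)
    (h₂ : IsWalkTo b c m) : IsWalkTo a c (w ++ m) := by
  cases m with
  | nil =>
    have hbc : b = c := h₂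
    rw [List.append_nil]
    exact hbc ▸ h₁
  | cons v m =>
    unfold IsWalkTo at h₂ ⊢
    rw [List.getLast_cons (List.cons_ne_nil _ _)] at h₂
    exact (List.getLast_append_of_ne_nil (l := a :: w) (l' := v :: m) _ (List.cons_ne_nil _ _)).trans h₂

lemma IsWalkTo.of_append {a b c : V} {w m : List V} (h : IsWalkTo a c (w ++ m))
    (hw : IsWalkTo a b w) : IsWalkTo b c m := by
  cases m with
  | nil =>
    rw [List.append_nil] at h
    exact hw.symm.trans h
  | cons v m =>
    unfold IsWalkTo at h ⊢
    rw [List.getLast_cons (List.cons_ne_nil _ _)]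
    exact (List.getLast_append_of_ne_nil (l := a :: w) (l' := v :: m) _ (List.cons_ne_nil _ _)).symm.trans h

lemma endToEnd_le {s d : V} {l : List V} (h : IsWalkTo s d l) (t : ℝ≥0∞) :
    endToEnd A s d t ≤ walkArr A s l t :=
  iInf_le (fun p : {l : List V // IsWalkTo s d l} => walkArr A s p.1 t) ⟨l, h⟩

/-- Any walk can be shortened to a duplicate-free walk with the same endpoints,
vertices among the original ones, and a pointwise smaller arrival function. -/
lemma exists_nodup_walk (hA : FIFO A) :
    ∀ (n : ℕ) (l : List V) (u : V), l.length ≤ n →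
    ∃ l' : List V, (u :: l').Nodup ∧ (∀ x ∈ l', x ∈ l) ∧
      (u :: l').getLast (List.cons_ne_nil _ _) = (u :: l).getLast (List.cons_ne_nil _ _) ∧
      ∀ t, walkArr A u l' t ≤ walkArr A u l t := by
  intro n
  induction n with
  | zero =>
    intro l u hl
    obtain rfl := List.length_eq_zero_iff.mp (Nat.le_zero.mp hl)
    exact ⟨[], by simp, by simp, rfl, fun t => le_rfl⟩
  | succ n ih =>
    intro l u hl
    by_cases hu : u ∈ l
    · obtain ⟨l₁, l₂, rfl⟩ := List.append_of_mem hu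
      have hlen : l₂.length ≤ n := by
        simp only [List.length_append, List.length_cons] at hl
        omega
      obtain ⟨l', h1, h2, h3, h4⟩ := ih l₂ u hlen
      refine ⟨l', h1, fun x hx => by simp [h2 x hx], ?_, fun t => ?_⟩
      · rw [h3]
        exact (List.getLast_append_of_ne_nil (l := u :: l₁) (l' := u :: l₂) _ (List.cons_ne_nil _ _)).symm
      · calc walkArr A u l' t ≤ walkArr A u l₂ t := h4 t
          _ ≤ walkArr A u l₂ (walkArr A u (l₁ ++ [u]) t) :=
              walkArr_mono hA _ _ (le_walkArr hA _ _ _)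
          _ = walkArr A u (l₁ ++ u :: l₂) t := by
              have hg : (u :: (l₁ ++ [u])).getLast (List.cons_ne_nil _ _) = u :=
                List.getLast_append_of_ne_nil (l := u :: l₁) (l' := [u]) _ (List.cons_ne_nil _ _)
              have happ := walkArr_append (A := A) u (l₁ ++ [u]) l₂ t
              rw [hg] at happ
              rw [show l₁ ++ u :: l₂ = (l₁ ++ [u]) ++ l₂ by simp, happ]
    · cases l with
      | nil => exact ⟨[], by simp, by simp, rfl, fun t => le_rfl⟩
      | cons v m =>
        have hlen : m.length ≤ n := by
          simp only [List.length_cons] at hl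
          omega
        obtain ⟨l', h1, h2, h3, h4⟩ := ih m v hlen
        have huv : u ∉ v :: l' := by
          intro hmem
          rcases List.mem_cons.mp hmem with rfl | hmem
          · exact hu (List.mem_cons_self)
          · exact hu (List.mem_cons_of_mem _ (h2 u hmem))
        refine ⟨v :: l', List.nodup_cons.mpr ⟨huv, h1⟩, ?_, ?_, fun t => h4 (A u v t)⟩
        · intro x hx
          rcases List.mem_cons.mp hx with rfl | hx
          · exact List.mem_cons_self
          · exact List.mem_cons_of_mem _ (h2 x hx)
        · rw [List.getLast_cons (List.cons_ne_nil _ _),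
            List.getLast_cons (List.cons_ne_nil _ _)]
          exact h3

/-- If the confined arrival value is not `⊤`, it is (essentially) attained by a
confined walk. -/
lemma confArr_attained [Fintype V] (hA : FIFO A) {U : Set V} {u v : V} {t : ℝ≥0∞}
    (h : confArr A U u v t ≠ ⊤) :
    ∃ l : List V, IsWalkTo u v l ∧ (∀ x ∈ u :: l, x ∈ U) ∧
      walkArr A u l t ≤ confArr A U u v t := by
  classical
  have hne : Nonempty {l : List V // IsWalkTo u v l ∧ ∀ x ∈ u :: l, x ∈ U} := by
    by_contra hc
    rw [not_nonempty_iff] at hc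
    exact h (by unfold confArr; exact iInf_of_empty _)
  have reduce : ∀ l : List V, IsWalkTo u v l → (∀ x ∈ u :: l, x ∈ U) →
      ∃ p : {l : List V // IsWalkTo u v l ∧ (∀ x ∈ u :: l, x ∈ U) ∧ (u :: l).Nodup},
        ∀ r, walkArr A u p.1 r ≤ walkArr A u l r := by
    intro l hl hconf
    obtain ⟨l', h1, h2, h3, h4⟩ := exists_nodup_walk hA l.length l u le_rfl
    refine ⟨⟨l', h3.trans hl, ?_, h1⟩, h4⟩
    intro x hx
    rcases List.mem_cons.mp hx with rfl | hx
    · exact hconf x (List.mem_cons_self)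
    · exact hconf x (List.mem_cons_of_mem _ (h2 x hx))
  have hNne : Nonempty {l : List V // IsWalkTo u v l ∧ (∀ x ∈ u :: l, x ∈ U) ∧
      (u :: l).Nodup} := by
    obtain ⟨⟨m, hm1, hm2⟩⟩ := hne
    obtain ⟨p, _⟩ := reduce m hm1 hm2
    exact ⟨p⟩
  have hNfin : Finite {l : List V // IsWalkTo u v l ∧ (∀ x ∈ u :: l, x ∈ U) ∧
      (u :: l).Nodup} := by
    have hfin : {l : List V | (u :: l).Nodup}.Finite := by
      apply (List.finite_length_le V (Fintype.card V)).subset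
      intro l hl
      have hcard := hl.length_le_card
      simp only [List.length_cons] at hcard
      simp only [Set.mem_setOf_eq]
      omega
    have : Finite {l : List V // (u :: l).Nodup} := hfin.to_subtype
    exact Finite.of_injective
      (fun p : {l : List V // IsWalkTo u v l ∧ (∀ x ∈ u :: l, x ∈ U) ∧ (u :: l).Nodup} =>
        (⟨p.1, p.2.2.2⟩ : {l : List V // (u :: l).Nodup}))
      (fun a b hab => by
        apply Subtype.ext
        have h := congrArg
          (Subtype.val : {l : List V // (u :: l).Nodup} → List V) hab
        exact h)
  obtain ⟨p₀, hp₀⟩ := Finite.exists_min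
    (fun p : {l : List V // IsWalkTo u v l ∧ (∀ x ∈ u :: l, x ∈ U) ∧ (u :: l).Nodup} =>
      walkArr A u p.1 t)
  refine ⟨p₀.1, p₀.2.1, p₀.2.2.1, le_iInf fun w => ?_⟩
  obtain ⟨p, hp⟩ := reduce w.1 w.2.1 w.2.2
  exact (hp₀ p).trans (hp t)

/-- A walk with finite arrival never uses an edge crossing the separator. -/
lemma chain_no_cross {V₁ V₂ : Set V} (hA : FIFO A)
    (hsep : ∀ u ∈ V₁, ∀ v ∈ V₂, (∀ t, A u v t = ⊤) ∧ (∀ t, A v u t = ⊤))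
    {u : V} {l : List V} {t : ℝ≥0∞} (h : walkArr A u l t ≠ ⊤) :
    List.Chain' (fun x y => ¬(x ∈ V₁ ∧ y ∈ V₂) ∧ ¬(x ∈ V₂ ∧ y ∈ V₁)) (u :: l) := by
  induction l generalizing u t with
  | nil => exact List.isChain_singleton _
  | cons v l ih =>
    have h' : walkArr A v l (A u v t) ≠ ⊤ := h
    refine List.isChain_cons_cons.mpr ⟨⟨fun hc => ?_, fun hc => ?_⟩, ih h'⟩
    · refine h' ?_
      rw [(hsep u hc.1 v hc.2).1 t]
      exact walkArr_top hA _ _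
    · refine h' ?_
      rw [(hsep v hc.2 u hc.1).2 t]
      exact walkArr_top hA _ _

/-- A crossing-free path segment whose interior avoids `S` lies entirely on one side of
the separator. -/
lemma segment_side {V₁ S V₂ : Set V} (hcover : V₁ ∪ S ∪ V₂ = Set.univ) :
    ∀ (m : List V) (a b : V),
      List.Chain' (fun x y => ¬(x ∈ V₁ ∧ y ∈ V₂) ∧ ¬(x ∈ V₂ ∧ y ∈ V₁)) (a :: (m ++ [b])) →
      (∀ x ∈ m, x ∉ S) →
      (∀ x ∈ a :: (m ++ [b]), x ∈ V₁ ∪ S) ∨ (∀ x ∈ a :: (m ++ [b]), x ∈ V₂ ∪ S) := by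
  have hmem : ∀ x : V, x ∈ V₁ ∨ x ∈ S ∨ x ∈ V₂ := by
    intro x
    have hx : x ∈ V₁ ∪ S ∪ V₂ := hcover ▸ Set.mem_univ x
    rcases hx with (h | h) | h
    · exact Or.inl h
    · exact Or.inr (Or.inl h)
    · exact Or.inr (Or.inr h)
  intro m
  induction m with
  | nil =>
    intro a b hch _
    have hab := (List.isChain_cons_cons.mp hch).1
    have hx2 : ∀ x : V, x ∈ a :: (([] : List V) ++ [b]) ↔ (x = a ∨ x = b) := by
      intro x; simp
    rcases hmem a with ha | ha | ha
    · rcases hmem b with hb | hb | hb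
      · refine Or.inl fun x hx => ?_
        rcases (hx2 x).mp hx with rfl | rfl
        exacts [Or.inl ha, Or.inl hb]
      · refine Or.inl fun x hx => ?_
        rcases (hx2 x).mp hx with rfl | rfl
        exacts [Or.inl ha, Or.inr hb]
      · exact absurd ⟨ha, hb⟩ hab.1
    · rcases hmem b with hb | hb | hb
      · refine Or.inl fun x hx => ?_
        rcases (hx2 x).mp hx with rfl | rfl
        exacts [Or.inr ha, Or.inl hb]
      · refine Or.inl fun x hx => ?_
        rcases (hx2 x).mp hx with rfl | rfl
        exacts [Or.inr ha, Or.inr hb]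
      · refine Or.inr fun x hx => ?_
        rcases (hx2 x).mp hx with rfl | rfl
        exacts [Or.inr ha, Or.inl hb]
    · rcases hmem b with hb | hb | hb
      · exact absurd ⟨ha, hb⟩ hab.2
      · refine Or.inr fun x hx => ?_
        rcases (hx2 x).mp hx with rfl | rfl
        exacts [Or.inl ha, Or.inr hb]
      · refine Or.inr fun x hx => ?_
        rcases (hx2 x).mp hx with rfl | rfl
        exacts [Or.inl ha, Or.inl hb]
  | cons x m ihm =>
    intro a b hch hS
    have h1 := (List.isChain_cons_cons.mp hch).1
    have h2 := (List.isChain_cons_cons.mp hch).2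
    have hxS : x ∉ S := hS x (List.mem_cons_self)
    rcases ihm x b h2 (fun y hy => hS y (List.mem_cons_of_mem _ hy)) with hL | hR
    · have hxV₁ : x ∈ V₁ := by
        rcases hL x (List.mem_cons_self) with h | h
        · exact h
        · exact absurd h hxS
      refine Or.inl fun y hy => ?_
      rcases List.mem_cons.mp hy with rfl | hy
      · rcases hmem y with h | h | h
        exacts [Or.inl h, Or.inr h, absurd ⟨h, hxV₁⟩ h1.2]
      · exact hL y hy
    · have hxV₂ : x ∈ V₂ := by
        rcases hR x (List.mem_cons_self) with h | h
        · exact h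
        · exact absurd h hxS
      refine Or.inr fun y hy => ?_
      rcases List.mem_cons.mp hy with rfl | hy
      · rcases hmem y with h | h | h
        exacts [absurd ⟨h, hxV₂⟩ h1.1, Or.inr h, Or.inl h]
      · exact hR y hy

end Aux

/-- A separator preserves the end-to-end arrival function: if `V` is partitioned into
`V₁, S, V₂` with no edges between `V₁` and `V₂`, then the network `A'` on `S ∪ {s, d}`
whose edge arrival functions are the minima of the arrival functions confined to the two
sides of the separator is a time-dependent network with the same `s`-to-`d` arrival
function as `A`. -/
theorem separator_preserves_endToEnd {V : Type*} [Fintype V]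
    (A : V → V → ℝ≥0∞ → ℝ≥0∞) (hA : FIFO A) (s d : V)
    (V₁ S V₂ : Set V)
    (h₁S : Disjoint V₁ S) (h₁₂ : Disjoint V₁ V₂) (hS₂ : Disjoint S V₂)
    (hcover : V₁ ∪ S ∪ V₂ = Set.univ)
    (hsep : ∀ u ∈ V₁, ∀ v ∈ V₂, (∀ t, A u v t = ⊤) ∧ (∀ t, A v u t = ⊤))
    (A' : (S ∪ {s, d} : Set V) → (S ∪ {s, d} : Set V) → ℝ≥0∞ → ℝ≥0∞)
    (hA' : ∀ u v t, A' u v t =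
      min (confArr A (V₁ ∪ S) u.1 v.1 t) (confArr A (V₂ ∪ S) u.1 v.1 t)) :
    FIFO A' ∧
      ∀ t, endToEnd A' ⟨s, by simp⟩ ⟨d, by simp⟩ t = endToEnd A s d t := by
  classical
  have hs' : s ∈ (S ∪ {s, d} : Set V) := by simp
  have hd' : d ∈ (S ∪ {s, d} : Set V) := by simp
  have hconf_mono : ∀ (U : Set V) (u v : V), Monotone (confArr A U u v) := by
    intro U u v a b hab
    exact le_iInf fun p => (iInf_le _ p).trans (walkArr_mono hA _ _ hab)
  have hfifo' : FIFO A' := by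
    intro u v
    constructor
    · intro a b hab
      rw [hA', hA']
      exact min_le_min (hconf_mono _ _ _ hab) (hconf_mono _ _ _ hab)
    · intro t
      rw [hA']
      exact le_min (le_iInf fun p => le_walkArr hA _ _ _)
        (le_iInf fun p => le_walkArr hA _ _ _)
  -- a non-⊤ edge of A' is witnessed by a walk of A
  have key : ∀ (u v : (S ∪ {s, d} : Set V)) (t : ℝ≥0∞), A' u v t ≠ ⊤ →
      ∃ w : List V, IsWalkTo u.1 v.1 w ∧ walkArr A u.1 w t ≤ A' u v t := by
    intro u v t hT
    rw [hA'] at hT ⊢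
    rcases le_total (confArr A (V₁ ∪ S) u.1 v.1 t) (confArr A (V₂ ∪ S) u.1 v.1 t)
      with h | h
    · rw [min_eq_left h] at hT ⊢
      obtain ⟨w, hw1, _, hw3⟩ := confArr_attained hA hT
      exact ⟨w, hw1, hw3⟩
    · rw [min_eq_right h] at hT ⊢
      obtain ⟨w, hw1, _, hw3⟩ := confArr_attained hA hT
      exact ⟨w, hw1, hw3⟩
  -- Direction 1 : every A'-walk dominates the A end-to-end function
  have D1 : ∀ (l : List (S ∪ {s, d} : Set V)) (u : (S ∪ {s, d} : Set V)) (t : ℝ≥0∞),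
      IsWalkTo u ⟨d, hd'⟩ l → endToEnd A u.1 d t ≤ walkArr A' u l t := by
    intro l
    induction l with
    | nil =>
      intro u t hw
      have hud : u.1 = d := congrArg Subtype.val hw
      exact endToEnd_le (show IsWalkTo u.1 d [] from hud) t
    | cons v l ih =>
      intro u t hw
      have hwv : IsWalkTo v ⟨d, hd'⟩ l := isWalkTo_cons.mp hw
      show endToEnd A u.1 d t ≤ walkArr A' v l (A' u v t)
      by_cases hT : A' u v t = ⊤
      · rw [hT, walkArr_top hfifo']
        exact le_top
      · refine le_trans ?_ (ih v (A' u v t) hwv)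
        obtain ⟨w, hw1, hw2⟩ := key u v t hT
        refine le_iInf fun m => ?_
        have hw1' : (u.1 :: w).getLast (List.cons_ne_nil _ _) = v.1 := hw1
        calc endToEnd A u.1 d t ≤ walkArr A u.1 (w ++ m.1) t :=
              endToEnd_le (hw1.append m.2) t
          _ = walkArr A v.1 m.1 (walkArr A u.1 w t) := by rw [walkArr_append, hw1']
          _ ≤ walkArr A v.1 m.1 (A' u v t) := walkArr_mono hA _ _ hw2
  -- Direction 2 : every A-walk is dominated by some A'-walk
  have D2 : ∀ (n : ℕ) (l : List V), l.length ≤ n →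
      ∀ (u : (S ∪ {s, d} : Set V)) (t : ℝ≥0∞), IsWalkTo u.1 d l →
      ∃ l' : List (S ∪ {s, d} : Set V), IsWalkTo u ⟨d, hd'⟩ l' ∧
        walkArr A' u l' t ≤ walkArr A u.1 l t := by
    intro n
    induction n with
    | zero =>
      intro l hl u t hw
      obtain rfl := List.length_eq_zero_iff.mp (Nat.le_zero.mp hl)
      exact ⟨[], Subtype.ext hw, le_rfl⟩
    | succ n ih =>
      intro l hl u t hw
      rcases eq_or_ne l [] with rfl | hlne
      · exact ⟨[], Subtype.ext hw, le_rfl⟩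
      by_cases hT : walkArr A u.1 l t = ⊤
      · refine ⟨[⟨d, hd'⟩], ?_, ?_⟩
        · show ([u, ⟨d, hd'⟩] : List _).getLast _ = _
          rw [List.getLast_cons (List.cons_ne_nil _ _)]
          rfl
        · rw [hT]; exact le_top
      -- split off the first segment
      set p : V → Bool := fun x => decide (x ∉ (S ∪ {s, d} : Set V)) with hp
      have hdl : d ∈ l := by
        have hw2 : (u.1 :: l).getLast (List.cons_ne_nil _ _) = d := hw
        have hld : l.getLast hlne = d := (List.getLast_cons hlne).symm.trans hw2
        exact hld ▸ List.getLast_mem hlne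
      have hrest_ne : l.dropWhile p ≠ [] := by
        intro hnil
        have := List.dropWhile_eq_nil_iff.mp hnil d hdl
        simp only [hp, decide_eq_true_eq] at this
        exact this hd'
      set v : V := (l.dropWhile p).head hrest_ne with hv
      have hv' : v ∈ (S ∪ {s, d} : Set V) := by
        have := List.head_dropWhile_not p hrest_ne
        rw [← hv] at this
        simp only [hp, decide_eq_false_iff_not, not_not] at this
        exact this
      set l₁ : List V := l.takeWhile p with hl₁def
      set l₂ : List V := (l.dropWhile p).tail with hl₂def
      have hrest : l.dropWhile p = v :: l₂ := (List.cons_head_tail hrest_ne).symm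
      have hsplit : l = l₁ ++ v :: l₂ := by
        rw [← hrest, hl₁def, List.takeWhile_append_dropWhile]
      have hl₁notS : ∀ x ∈ l₁, x ∉ S := by
        intro x hx
        have := List.mem_takeWhile_imp hx
        simp only [hp, decide_eq_true_eq] at this
        intro hxS
        exact this (Or.inl hxS)
      set seg : List V := l₁ ++ [v] with hsegdef
      have hshape : u.1 :: l = (u.1 :: seg) ++ l₂ := by
        rw [hsplit, hsegdef]
        simp
      have hlast : (u.1 :: seg).getLast (List.cons_ne_nil _ _) = v :=
        List.getLast_append_of_ne_nil (l := u.1 :: l₁) (l' := [v]) _ (List.cons_ne_nil _ _)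
      have hseg_walk : IsWalkTo u.1 v seg := hlast
      have hIsv : IsWalkTo v d l₂ := by
        have hfull : IsWalkTo u.1 d (seg ++ l₂) := by
          have : seg ++ l₂ = l := by rw [hsegdef, hsplit]; simp
          rw [this]; exact hw
        exact hfull.of_append hseg_walk
      have hseg_arr : walkArr A u.1 l t = walkArr A v l₂ (walkArr A u.1 seg t) := by
        conv_lhs => rw [show l = seg ++ l₂ by rw [hsegdef, hsplit]; simp]
        rw [walkArr_append, hlast]
      -- the segment lies on one side of the separator
      have hnc := chain_no_cross (V₁ := V₁) (V₂ := V₂) hA hsep hT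
      rw [hshape] at hnc
      have hnc_seg := (List.isChain_append.mp hnc).1
      have hside := segment_side hcover l₁ u.1 v
        (by rw [hsegdef] at hnc_seg; exact hnc_seg) hl₁notS
      have hconf : A' u ⟨v, hv'⟩ t ≤ walkArr A u.1 seg t := by
        rw [hA']
        rcases hside with h | h
        · exact (min_le_left _ _).trans
            (iInf_le (fun q : {m : List V // IsWalkTo u.1 v m ∧ ∀ x ∈ u.1 :: m, x ∈ V₁ ∪ S}
              => walkArr A u.1 q.1 t) ⟨seg, hseg_walk, by rw [hsegdef]; exact h⟩)
        · exact (min_le_right _ _).trans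
            (iInf_le (fun q : {m : List V // IsWalkTo u.1 v m ∧ ∀ x ∈ u.1 :: m, x ∈ V₂ ∪ S}
              => walkArr A u.1 q.1 t) ⟨seg, hseg_walk, by rw [hsegdef]; exact h⟩)
      have hlen : l₂.length ≤ n := by
        have : l.length = l₁.length + (l₂.length + 1) := by
          rw [hsplit]; simp [Nat.add_comm]
        omega
      obtain ⟨l₂', hl₂'w, hl₂'le⟩ := ih l₂ hlen ⟨v, hv'⟩ (A' u ⟨v, hv'⟩ t) hIsv
      refine ⟨⟨v, hv'⟩ :: l₂', isWalkTo_cons.mpr hl₂'w, ?_⟩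
      calc walkArr A' u (⟨v, hv'⟩ :: l₂') t
          = walkArr A' ⟨v, hv'⟩ l₂' (A' u ⟨v, hv'⟩ t) := rfl
        _ ≤ walkArr A v l₂ (A' u ⟨v, hv'⟩ t) := hl₂'le
        _ ≤ walkArr A v l₂ (walkArr A u.1 seg t) := walkArr_mono hA _ _ hconf
        _ = walkArr A u.1 l t := hseg_arr.symm
  refine ⟨hfifo', fun t => le_antisymm ?_ ?_⟩
  · refine le_iInf fun q => ?_
    obtain ⟨l', h1, h2⟩ := D2 q.1.length q.1 le_rfl ⟨s, hs'⟩ t q.2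
    exact (iInf_le (fun p : {l : List (S ∪ {s, d} : Set V) //
      IsWalkTo ⟨s, hs'⟩ ⟨d, hd'⟩ l} => walkArr A' ⟨s, hs'⟩ p.1 t) ⟨l', h1⟩).trans h2
  · exact le_iInf fun q => D1 q.1 ⟨s, hs'⟩ t q.2
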